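/- Let A be a commutative ring and suppose f ∈ A[[x, y]] is a power series f = Σ_{n,m} b_{n,m} x^n y^m. Fix d. If for every N ∈ ℕ the coefficient of h^d in f evaluated h-adically at x = e^{2h} − 1, y = e^{2Nh} − 1 vanishes, and b_{n,m} = 0 whenever n + m < d, then b_{n,m} = 0 for all n + m = d. -/

import Mathlib

open PowerSeries

private lemma expand10 (c : ℚ) : rescale c (exp ℚ) - 1 =
    (PowerSeries.mk fun k => c ^ (k+1) / Nat.factorial (k+1)) * X := by
  ext k
  cases k with
  | zero =>
    simp [map_sub, coeff_rescale, coeff_exp, PowerSeries.coeff_one,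
      PowerSeries.coeff_zero_mul_X]
  | succ k =>
    rw [PowerSeries.coeff_succ_mul_X]
    simp [coeff_rescale, coeff_exp, PowerSeries.coeff_one, coeff_mk, div_eq_mul_inv]

/-- Let `f = ∑ b_{n,m} x^n y^m` be a power series over `ℚ` and fix `d`.  If
`b_{n,m} = 0` whenever `n + m < d`, and for every `N ∈ ℕ` the coefficient of `h^d` of
`f` substituted `h`-adically at `x = e^{2h} - 1`, `y = e^{2Nh} - 1` vanishes
(only terms with `n, m ≤ d` contribute to this coefficient), then `b_{n,m} = 0`
for all `n + m = d`. -/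
theorem stmt10 (b : ℕ → ℕ → ℚ) (d : ℕ)
    (hlow : ∀ n m : ℕ, n + m < d → b n m = 0)
    (hvan : ∀ N : ℕ,
      PowerSeries.coeff (R := ℚ) d
        (∑ n ∈ Finset.range (d + 1), ∑ m ∈ Finset.range (d + 1),
          PowerSeries.C (R := ℚ) (b n m) *
            ((PowerSeries.rescale (2 : ℚ) (PowerSeries.exp ℚ) - 1) ^ n *
              (PowerSeries.rescale (2 * (N : ℚ)) (PowerSeries.exp ℚ) - 1) ^ m)) = 0) :
    ∀ n m : ℕ, n + m = d → b n m = 0 := by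
  have hcc : ∀ (c : ℚ) (n : ℕ), constantCoeff (R := ℚ)
      ((PowerSeries.mk fun k => c ^ (k+1) / Nat.factorial (k+1) : ℚ⟦X⟧) ^ n) = c ^ n := by
    intro c n
    rw [map_pow]
    simp [PowerSeries.constantCoeff_mk]
  have key : ∀ N : ℕ,
      ∑ m ∈ Finset.range (d + 1), b (d - m) m * 2 ^ d * (N : ℚ) ^ m = 0 := by
    intro N
    have h := hvan N
    have hterm : ∀ n ∈ Finset.range (d+1), ∀ m ∈ Finset.range (d+1),
        PowerSeries.coeff (R := ℚ) d (PowerSeries.C (R := ℚ) (b n m) *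
            ((rescale (2 : ℚ) (exp ℚ) - 1) ^ n *
              (rescale (2 * (N : ℚ)) (exp ℚ) - 1) ^ m))
        = if n = d - m then b n m * (2 ^ n * (2 * (N:ℚ)) ^ m) else 0 := by
      intro n hn m hm
      simp only [Finset.mem_range] at hn hm
      rw [expand10, expand10, mul_pow, mul_pow]
      have hre : ∀ u v : ℚ⟦X⟧, PowerSeries.C (R := ℚ) (b n m) * (u ^ n * X ^ n * (v ^ m * X ^ m))
          = (PowerSeries.C (R := ℚ) (b n m) * (u ^ n * v ^ m)) * X ^ (n + m) := by
        intro u v; rw [pow_add]; ring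
      rw [hre, PowerSeries.coeff_mul_X_pow']
      rcases lt_trichotomy (n + m) d with hlt | heq | hgt
      · rw [hlow n m hlt]
        simp only [map_zero, zero_mul, if_pos hlt.le]
        split <;> simp
      · have hle : n + m ≤ d := heq.le
        rw [if_pos hle]
        have : d - (n + m) = 0 := by omega
        rw [this, PowerSeries.coeff_zero_eq_constantCoeff_apply, map_mul, map_mul,
          constantCoeff_C, hcc, hcc]
        rw [if_pos (by omega : n = d - m)]
      · rw [if_neg (by omega), if_neg (by omega)]
    simp only [map_sum] at h
    rw [Finset.sum_congr rfl (fun n hn => Finset.sum_congr rfl (fun m hm => hterm n hn m hm)),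
      Finset.sum_comm] at h
    rw [← h]
    refine Finset.sum_congr rfl fun m hm => ?_
    simp only [Finset.mem_range] at hm
    rw [Finset.sum_ite_eq' (Finset.range (d+1)) (d - m)
      (fun n => b n m * (2 ^ n * (2 * (N:ℚ)) ^ m))]
    rw [if_pos (by simp only [Finset.mem_range]; omega)]
    have h2 : (2:ℚ) ^ (d - m) * 2 ^ m = 2 ^ d := by
      rw [← pow_add]; congr 1; omega
    rw [mul_pow, ← mul_assoc ((2:ℚ) ^ (d - m)), h2]
    ring
  set p : Polynomial ℚ :=
    ∑ m ∈ Finset.range (d + 1), Polynomial.C (b (d - m) m * 2 ^ d) * Polynomial.X ^ m with hp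
  have hroots : p = 0 := by
    apply Polynomial.eq_zero_of_infinite_isRoot
    apply Set.Infinite.mono (s := Set.range (Nat.cast : ℕ → ℚ))
    · rintro _ ⟨N, rfl⟩
      show p.IsRoot _
      rw [Polynomial.IsRoot, hp]
      simp only [Polynomial.eval_finset_sum, Polynomial.eval_mul, Polynomial.eval_C,
        Polynomial.eval_pow, Polynomial.eval_X]
      exact key N
    · exact Set.infinite_range_of_injective Nat.cast_injective
  intro n m hnm
  have hm : m ∈ Finset.range (d + 1) := by simp; omega
  have hcoeff : p.coeff m = b (d - m) m * 2 ^ d := by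
    rw [hp, Polynomial.finset_sum_coeff]
    rw [Finset.sum_congr rfl (fun j _ => by
      rw [Polynomial.coeff_C_mul, Polynomial.coeff_X_pow])]
    simp [Finset.sum_ite_eq, hm]
  rw [hroots, Polynomial.coeff_zero] at hcoeff
  have hb : b (d - m) m = 0 := by
    have h2 : (2:ℚ)^d ≠ 0 := by positivity
    rcases mul_eq_zero.mp hcoeff.symm with h | h
    · exact h
    · exact absurd h h2
  rw [show n = d - m by omega]
  exact hb
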